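/- arXiv:2204.03365 — 4 statements merged into one kernel-verified Lean document; each statement's English description precedes it below -/
import Mathlib

section
/- (a) For all (n,i), (m,j) ∈ S with (n,i) < (m,j) in the lexicographic order, v(s_{n,i} − s_{m,j}) = δ(n,i). (b) For all (n,i) ∈ S, v(s − s_{n,i}) = δ(n,i). (c) Consequently, for all (n,i), (m,j) ∈ S, ω_{s_{n,i},δ(n,i)}(x − s_{m,j}) = min(δ(n,i), δ(m,j)). -/
/-!
Common setup: `p` a prime, `F` an algebraic closure of `𝔽_p`, `H = F((t^ℚ))` the Hahn series
field with its canonical additive valuation `v` (minimum of the support), the Newton–Puiseux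
subfield `K ⊆ H`, the elements `s_n`, the series `s = ∑ tⁿ·s_n`, the truncations `s_{n,i}`,
the rationals `δ(n,i) = n - 1/p^(i+1)`, and the depth-zero valuations `ω_{a,δ}`.
-/

open Polynomial HahnSeries

variable (p : ℕ) [Fact p.Prime]

/-- `F`, an algebraic closure of `𝔽_p`. -/
abbrev Fbar : Type := AlgebraicClosure (ZMod p)

/-- The Hahn series field `H = F((t^ℚ))`. -/
abbrev H : Type := HahnSeries ℚ (Fbar p)

/-- The additive valuation `v(f) = min (supp f)`, with `v 0 = ∞`. -/
noncomputable def v (f : H p) : WithTop ℚ := f.orderTop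

/-- The exponent `-1/p^(j+1)`. -/
def expo (j : ℕ) : ℚ := -((p : ℚ) ^ (j + 1))⁻¹

lemma one_lt_p : (1 : ℚ) < p := by
  exact_mod_cast (Fact.out : p.Prime).one_lt

lemma expo_mono : Monotone (expo p) := by
  intro j k hjk
  have hp : (1 : ℚ) < p := one_lt_p p
  have h1 : (0 : ℚ) < (p : ℚ) ^ (j + 1) := pow_pos (lt_trans one_pos hp) _
  have h2 : (p : ℚ) ^ (j + 1) ≤ (p : ℚ) ^ (k + 1) :=
    pow_le_pow_right₀ (le_of_lt hp) (by omega)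
  have := inv_anti₀ h1 h2
  simp only [expo, neg_le_neg_iff]
  linarith

lemma isPWO_univ_nat : (Set.univ : Set ℕ).IsPWO :=
  (Set.isWF_univ_iff.2 ⟨wellFounded_lt⟩).isPWO

-- `s_n = ∑_{j ≥ n} C(j,n)·t^(-1/p^(j+1))`, where `C(j,n)` is `j.choose n` reduced mod `p`.
open Classical in
noncomputable def sn (n : ℕ) : H p where
  coeff q := if h : ∃ j : ℕ, n ≤ j ∧ q = expo p j then (Nat.choose h.choose n : Fbar p) else 0
  isPWO_support' := by
    apply ((isPWO_univ_nat.image_of_monotone (expo_mono p)).mono)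
    intro q hq
    simp only [Function.mem_support] at hq
    have h : ∃ j : ℕ, n ≤ j ∧ q = expo p j := by
      by_contra h
      rw [dif_neg h] at hq
      exact hq rfl
    obtain ⟨j, _, rfl⟩ := h
    exact ⟨j, Set.mem_univ j, rfl⟩

-- `s = ∑_{n ≥ 0} tⁿ·s_n`, i.e. the series with coefficient `C(j,n)` at `n - 1/p^(j+1)`.
open Classical in
noncomputable def sH : H p where
  coeff q := if h : ∃ nj : ℕ × ℕ, nj.1 ≤ nj.2 ∧ q = (nj.1 : ℚ) + expo p nj.2 then
      (Nat.choose h.choose.2 h.choose.1 : Fbar p) else 0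
  isPWO_support' := by
    have hmono : Monotone (fun nj : ℕ × ℕ => (nj.1 : ℚ) + expo p nj.2) := by
      intro a b hab
      exact add_le_add (by exact_mod_cast hab.1) (expo_mono p hab.2)
    apply ((isPWO_univ_nat.prod isPWO_univ_nat).image_of_monotone hmono).mono
    intro q hq
    simp only [Function.mem_support] at hq
    have h : ∃ nj : ℕ × ℕ, nj.1 ≤ nj.2 ∧ q = (nj.1 : ℚ) + expo p nj.2 := by
      by_contra h
      rw [dif_neg h] at hq
      exact hq rfl
    obtain ⟨nj, _, rfl⟩ := h
    exact ⟨nj, by simp [Set.mem_prod], rfl⟩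

/-- The additive map `ℤ →+ ℚ`, `k ↦ k/N`. -/
def embQ (N : ℕ) : ℤ →+ ℚ where
  toFun k := (k : ℚ) / (N : ℚ)
  map_zero' := by simp
  map_add' := by intros; push_cast; ring

lemma embQ_inj {N : ℕ} (hN : 0 < N) : Function.Injective (embQ N) := by
  intro a b hab
  have hN' : (0 : ℚ) < N := by exact_mod_cast hN
  simpa [embQ, div_eq_div_iff hN'.ne' hN'.ne', hN'.ne'] using hab

lemma embQ_mono {N : ℕ} (hN : 0 < N) : ∀ g g' : ℤ, embQ N g ≤ embQ N g' ↔ g ≤ g' := by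
  intro g g'
  have hN' : (0 : ℚ) < N := by exact_mod_cast hN
  simp [embQ, div_le_div_iff_of_pos_right hN', Int.cast_le]

lemma embQ_strictMono {N : ℕ} (hN : 0 < N) : StrictMono (embQ N) := by
  have := embQ_mono hN
  exact strictMono_of_le_iff_le fun a b => (this a b).symm

/-- Laurent series (Hahn series over `ℤ`) mapped into `H p` via `k ↦ k/N`. -/
noncomputable def laurentInc (N : ℕ) (hN : 0 < N) : HahnSeries ℤ (Fbar p) →+* H p :=
  HahnSeries.embDomainRingHom (embQ N) (embQ_inj hN) (embQ_mono hN)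

lemma mem_range_laurentInc_iff {N : ℕ} (hN : 0 < N) (f : H p) :
    (∃ g, laurentInc p N hN g = f) ↔ ∀ q ∈ f.support, ∃ k : ℤ, q = (k : ℚ) / N := by
  constructor
  · rintro ⟨g, rfl⟩ q hq
    obtain ⟨k, -, rfl⟩ := HahnSeries.support_embDomain_subset hq
    exact ⟨k, rfl⟩
  · intro hf
    classical
    have hpwo : (Function.support fun k : ℤ => f.coeff (embQ N k)).IsPWO := by
      apply Set.IsWF.isPWO
      rw [Set.isWF_iff_no_descending_seq]
      intro φ hφ hmem
      apply Set.isWF_iff_no_descending_seq.mp f.isWF_support (fun n => embQ N (φ n))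
        ((embQ_strictMono hN).comp_strictAnti hφ)
      intro n
      exact hmem n
    refine ⟨⟨fun k => f.coeff (embQ N k), hpwo⟩, ?_⟩
    apply HahnSeries.ext
    funext q
    by_cases hq : q ∈ Set.range (embQ N)
    · obtain ⟨k, rfl⟩ := hq
      exact HahnSeries.embDomain_mk_coeff (embQ_inj hN) (embQ_mono hN)
    · rw [show (laurentInc p N hN ⟨fun k => f.coeff (embQ N k), hpwo⟩).coeff q = 0 from
        HahnSeries.embDomain_notin_range hq]
      by_contra hne
      obtain ⟨k, hk⟩ := hf q (by simpa [HahnSeries.mem_support] using Ne.symm hne)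
      exact hq ⟨k, hk.symm⟩

/-- The Newton–Puiseux field `K`: Hahn series whose support lies in `(1/N)·ℤ` for some `N > 0`. -/
noncomputable def KNP : Subfield (H p) where
  carrier := {f : H p | ∃ N : ℕ, 0 < N ∧ ∀ q ∈ f.support, ∃ k : ℤ, q = (k : ℚ) / N}
  zero_mem' := ⟨1, one_pos, by simp⟩
  one_mem' := by
    refine ⟨1, one_pos, fun q hq => ?_⟩
    rw [HahnSeries.support_one] at hq
    exact ⟨0, by simp [Set.mem_singleton_iff.mp hq]⟩
  add_mem' := by
    rintro x y ⟨N, hN, hx⟩ ⟨M, hM, hy⟩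
    refine ⟨N * M, Nat.mul_pos hN hM, fun q hq => ?_⟩
    rcases HahnSeries.support_add_subset _ _ hq with h | h
    · obtain ⟨k, rfl⟩ := hx q h
      refine ⟨k * M, ?_⟩
      have hM' : (M : ℚ) ≠ 0 := by exact_mod_cast hM.ne'
      have hN' : (N : ℚ) ≠ 0 := by exact_mod_cast hN.ne'
      push_cast
      field_simp
    · obtain ⟨k, rfl⟩ := hy q h
      refine ⟨k * N, ?_⟩
      have hM' : (M : ℚ) ≠ 0 := by exact_mod_cast hM.ne'
      have hN' : (N : ℚ) ≠ 0 := by exact_mod_cast hN.ne'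
      push_cast
      field_simp
  neg_mem' := by
    rintro x ⟨N, hN, hx⟩
    exact ⟨N, hN, fun q hq => hx q (by rwa [HahnSeries.support_neg] at hq)⟩
  mul_mem' := by
    rintro x y ⟨N, hN, hx⟩ ⟨M, hM, hy⟩
    refine ⟨N * M, Nat.mul_pos hN hM, fun q hq => ?_⟩
    obtain ⟨q₁, hq₁, q₂, hq₂, rfl⟩ := HahnSeries.support_mul_subset hq
    obtain ⟨k₁, rfl⟩ := hx q₁ hq₁
    obtain ⟨k₂, rfl⟩ := hy q₂ hq₂
    refine ⟨k₁ * M + k₂ * N, ?_⟩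
    have hM' : (M : ℚ) ≠ 0 := by exact_mod_cast hM.ne'
    have hN' : (N : ℚ) ≠ 0 := by exact_mod_cast hN.ne'
    push_cast
    field_simp
  inv_mem' := by
    rintro x ⟨N, hN, hx⟩
    obtain ⟨g, rfl⟩ := (mem_range_laurentInc_iff p hN x).mpr hx
    rw [← map_inv₀]
    exact ⟨N, hN, ((mem_range_laurentInc_iff p hN _).mp ⟨g⁻¹, rfl⟩)⟩

/-- The truncation `s_{n,i} = ∑_{m<n} tᵐ·s_m + tⁿ·∑_{n ≤ j < i} C(j,n)·t^(-1/p^(j+1))`. -/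
noncomputable def strunc (n i : ℕ) : H p :=
  (∑ m ∈ Finset.range n, HahnSeries.single (m : ℚ) 1 * sn p m)
  + HahnSeries.single (n : ℚ) 1 *
      (∑ j ∈ Finset.Ico n i, HahnSeries.single (expo p j) ((Nat.choose j n : Fbar p)))

/-- `δ(n,i) = n - 1/p^(i+1)`. -/
def dlt (n i : ℕ) : ℚ := (n : ℚ) - ((p : ℚ) ^ (i + 1))⁻¹

/-- The depth-zero valuation `ω_{a,δ}(f) = min_ℓ (v(a_ℓ) + ℓ·δ)`, where
`f = ∑_ℓ a_ℓ·(x-a)^ℓ` is the Taylor expansion of `f` at `a`. -/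
noncomputable def om (a : H p) (δ : ℚ) (f : Polynomial (H p)) : WithTop ℚ :=
  (Finset.range (f.natDegree + 1)).inf
    fun ℓ => v p ((Polynomial.taylor a f).coeff ℓ) + (((ℓ : ℚ) * δ : ℚ) : WithTop ℚ)

-- The degree `[K(b) : K]` of an element `b ∈ H` over the Newton–Puiseux field `K`.
set_option synthInstance.maxHeartbeats 1000000 in
noncomputable def degK (b : H p) : ℕ :=
  Module.finrank (KNP p) (IntermediateField.adjoin (KNP p) {b})

lemma tinv_mem : HahnSeries.single (-1 : ℚ) (1 : Fbar p) ∈ KNP p := by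
  refine ⟨1, one_pos, fun q hq => ?_⟩
  have := HahnSeries.support_single_subset hq
  exact ⟨-1, by simp [Set.mem_singleton_iff.mp this]⟩

/-- `t^(-1) = single (-1) 1` as an element of `K`. -/
noncomputable def tinv : KNP p := ⟨HahnSeries.single (-1 : ℚ) (1 : Fbar p), tinv_mem p⟩

section AuxStrunc

variable (p : ℕ) [Fact p.Prime]

lemma expo_neg' (j : ℕ) : expo p j < 0 := by
  have hp : (1 : ℚ) < p := one_lt_p p
  have h0 : (0 : ℚ) < (p : ℚ) ^ (j + 1) := pow_pos (by linarith) _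
  have := inv_pos.2 h0
  simp only [expo]
  linarith

lemma expo_gt' (j : ℕ) : (-1 : ℚ) < expo p j := by
  have hp : (1 : ℚ) < p := one_lt_p p
  have h1 : (1 : ℚ) < (p : ℚ) ^ (j + 1) := one_lt_pow₀ (by linarith) (by omega)
  have h0 : (0 : ℚ) < (p : ℚ) ^ (j + 1) := by linarith
  have h2 : ((p : ℚ) ^ (j + 1))⁻¹ < 1 := by
    rw [inv_lt_one_iff₀]
    right; exact h1
  simp only [expo]
  linarith

lemma expo_strictMono : StrictMono (expo p) := by
  intro i j hij
  have hp : (1 : ℚ) < p := one_lt_p p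
  have h0 : (0 : ℚ) < (p : ℚ) ^ (i + 1) := pow_pos (by linarith) _
  have h1 : (p : ℚ) ^ (i + 1) < (p : ℚ) ^ (j + 1) :=
    pow_lt_pow_right₀ hp (by omega)
  have h2 : ((p : ℚ) ^ (j + 1))⁻¹ < ((p : ℚ) ^ (i + 1))⁻¹ := by
    apply inv_strictAnti₀ h0 h1
  simp only [expo]
  linarith

lemma expo_inj {i j : ℕ} (h : expo p i = expo p j) : i = j :=
  (expo_strictMono p).injective h

lemma key_inj {a b a' b' : ℕ} (h : (a : ℚ) + expo p b = (a' : ℚ) + expo p b') :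
    a = a' ∧ b = b' := by
  have e1 := expo_neg' p b
  have e2 := expo_gt' p b
  have e3 := expo_neg' p b'
  have e4 := expo_gt' p b'
  have h1 : (a : ℚ) < (a' : ℚ) + 1 := by linarith
  have h2 : (a' : ℚ) < (a : ℚ) + 1 := by linarith
  have h1' : a < a' + 1 := by exact_mod_cast h1
  have h2' : a' < a + 1 := by exact_mod_cast h2
  have haa : a = a' := by omega
  subst haa
  refine ⟨rfl, expo_inj p ?_⟩
  linarith

open Classical in
lemma sn_coeff (n : ℕ) (q : ℚ) :
    (sn p n).coeff q =
      if h : ∃ j : ℕ, n ≤ j ∧ q = expo p j then (Nat.choose h.choose n : Fbar p) else 0 := rfl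

lemma sn_coeff_of (n j : ℕ) (h : n ≤ j) :
    (sn p n).coeff (expo p j) = (j.choose n : Fbar p) := by
  classical
  have hex : ∃ j' : ℕ, n ≤ j' ∧ expo p j = expo p j' := ⟨j, h, rfl⟩
  rw [sn_coeff, dif_pos hex]
  obtain ⟨h1, h2⟩ := hex.choose_spec
  rw [show hex.choose = j from (expo_inj p h2).symm]

lemma sn_coeff_zero (n : ℕ) (q : ℚ) (h : ∀ j : ℕ, n ≤ j → q ≠ expo p j) :
    (sn p n).coeff q = 0 := by
  classical
  rw [sn_coeff, dif_neg]
  rintro ⟨j, hj, hq⟩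
  exact h j hj hq

open Classical in
lemma sH_coeff (q : ℚ) :
    (sH p).coeff q =
      if h : ∃ nj : ℕ × ℕ, nj.1 ≤ nj.2 ∧ q = (nj.1 : ℚ) + expo p nj.2 then
        (Nat.choose h.choose.2 h.choose.1 : Fbar p) else 0 := rfl

lemma sH_coeff_of (a b : ℕ) (h : a ≤ b) :
    (sH p).coeff ((a : ℚ) + expo p b) = (b.choose a : Fbar p) := by
  classical
  have hex : ∃ nj : ℕ × ℕ, nj.1 ≤ nj.2 ∧ (a : ℚ) + expo p b = (nj.1 : ℚ) + expo p nj.2 :=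
    ⟨(a, b), h, rfl⟩
  rw [sH_coeff, dif_pos hex]
  obtain ⟨h1, h2⟩ := hex.choose_spec
  obtain ⟨ha, hb⟩ := key_inj p h2
  rw [← ha, ← hb]

lemma sH_coeff_zero (q : ℚ) (h : ∀ a b : ℕ, a ≤ b → q ≠ (a : ℚ) + expo p b) :
    (sH p).coeff q = 0 := by
  classical
  rw [sH_coeff, dif_neg]
  rintro ⟨⟨a, b⟩, hab, hq⟩
  exact h a b hab hq

lemma smul_coeff' (c : ℚ) (x : H p) (q : ℚ) :
    (HahnSeries.single c (1 : Fbar p) * x).coeff q = x.coeff (q - c) := by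
  have h := HahnSeries.coeff_single_mul_add (R := Fbar p) (Γ := ℚ)
    (r := (1 : Fbar p)) (x := x) (a := q - c) (b := c)
  have e : q - c + c = q := by ring
  rw [e] at h
  rw [h, one_mul]

lemma coeff_sum' {α : Type*} (s : Finset α) (f : α → H p) (q : ℚ) :
    (∑ a ∈ s, f a).coeff q = ∑ a ∈ s, (f a).coeff q :=
  map_sum (HahnSeries.coeff.addMonoidHom q) f s

lemma strunc_coeff (n i : ℕ) (q : ℚ) :
    (strunc p n i).coeff q =
      (∑ m ∈ Finset.range n, (sn p m).coeff (q - m)) +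
        ∑ j ∈ Finset.Ico n i,
          (HahnSeries.single (expo p j) ((j.choose n : Fbar p))).coeff (q - n) := by
  simp only [strunc, HahnSeries.coeff_add, coeff_sum', smul_coeff']

lemma strunc_coeff_rep (n i a b : ℕ) (hab : a ≤ b) :
    (strunc p n i).coeff ((a : ℚ) + expo p b) =
      if a < n ∨ (a = n ∧ b < i) then (b.choose a : Fbar p) else 0 := by
  rw [strunc_coeff]
  have h1 : (∑ m ∈ Finset.range n, (sn p m).coeff (((a : ℚ) + expo p b) - m)) =
      if a < n then (b.choose a : Fbar p) else 0 := by
    split_ifs with h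
    · rw [Finset.sum_eq_single_of_mem a (Finset.mem_range.2 h)
        (fun m _ hma => sn_coeff_zero p m _
          (fun j _ hq => hma ((key_inj p (by linarith : (a : ℚ) + expo p b
            = (m : ℚ) + expo p j)).1).symm))]
      have e : ((a : ℚ) + expo p b) - a = expo p b := by ring
      rw [e, sn_coeff_of p a b hab]
    · apply Finset.sum_eq_zero
      intro m hm
      apply sn_coeff_zero
      intro j _ hq
      have hm' := Finset.mem_range.1 hm
      have := (key_inj p (by linarith : (a : ℚ) + expo p b = (m : ℚ) + expo p j)).1
      omega
  have h2 : (∑ j ∈ Finset.Ico n i,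
      (HahnSeries.single (expo p j) ((j.choose n : Fbar p))).coeff (((a : ℚ) + expo p b) - n)) =
      if a = n ∧ b < i then (b.choose a : Fbar p) else 0 := by
    split_ifs with h
    · obtain ⟨rfl, hbi⟩ := h
      rw [Finset.sum_eq_single_of_mem b (Finset.mem_Ico.2 ⟨hab, hbi⟩)
        (fun j _ hjb => HahnSeries.coeff_single_of_ne
          (fun hq => hjb ((key_inj p (by linarith : (a : ℚ) + expo p b
            = (a : ℚ) + expo p j)).2).symm))]
      have e : ((a : ℚ) + expo p b) - a = expo p b := by ring
      rw [e, HahnSeries.coeff_single_same]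
    · apply Finset.sum_eq_zero
      intro j hj
      apply HahnSeries.coeff_single_of_ne
      intro hq
      obtain ⟨hnj, hji⟩ := Finset.mem_Ico.1 hj
      obtain ⟨ha, hb⟩ := key_inj p (by linarith : (a : ℚ) + expo p b = (n : ℚ) + expo p j)
      exact h ⟨ha, by omega⟩
  rw [h1, h2]
  by_cases hA : a < n
  · rw [if_pos hA, if_neg (by omega), if_pos (Or.inl hA), add_zero]
  · rw [if_neg hA]
    by_cases hB : a = n ∧ b < i
    · rw [if_pos hB, if_pos (Or.inr hB), zero_add]
    · rw [if_neg hB, if_neg (by tauto), add_zero]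

lemma strunc_coeff_nonrep (n i : ℕ) (q : ℚ)
    (h : ∀ a b : ℕ, a ≤ b → q ≠ (a : ℚ) + expo p b) :
    (strunc p n i).coeff q = 0 := by
  rw [strunc_coeff]
  have e1 : (∑ m ∈ Finset.range n, (sn p m).coeff (q - m)) = 0 := by
    apply Finset.sum_eq_zero
    intro m _
    apply sn_coeff_zero
    intro j hj hq
    exact h m j hj (by linarith)
  have e2 : (∑ j ∈ Finset.Ico n i,
      (HahnSeries.single (expo p j) ((j.choose n : Fbar p))).coeff (q - n)) = 0 := by
    apply Finset.sum_eq_zero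
    intro j hj
    apply HahnSeries.coeff_single_of_ne
    intro hq
    obtain ⟨hnj, _⟩ := Finset.mem_Ico.1 hj
    exact h n j hnj (by linarith)
  rw [e1, e2, add_zero]

lemma choose_cast_ne {i n : ℕ} (h : ¬ p ∣ i.choose n) : ((i.choose n : Fbar p)) ≠ 0 := by
  intro hz
  exact h ((CharP.cast_eq_zero_iff (Fbar p) p _).1 hz)

lemma orderTop_eq_of' (f : H p) (δ : ℚ) (h1 : f.coeff δ ≠ 0)
    (h2 : ∀ q : ℚ, q < δ → f.coeff q = 0) : f.orderTop = δ := by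
  apply HahnSeries.orderTop_eq_of_le
  · exact h1
  · intro g' hg'
    by_contra hlt
    push_neg at hlt
    exact hg' (h2 g' hlt)

lemma cond_of_lt (n i a b : ℕ) (h : (a : ℚ) + expo p b < (n : ℚ) + expo p i) :
    a < n ∨ (a = n ∧ b < i) := by
  rcases lt_trichotomy a n with hc | hc | hc
  · exact Or.inl hc
  · subst hc
    exact Or.inr ⟨rfl, (expo_strictMono p).lt_iff_lt.1 (by linarith)⟩
  · exfalso
    have h1 : (n : ℚ) + 1 ≤ (a : ℚ) := by exact_mod_cast hc
    have := expo_neg' p i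
    have := expo_gt' p b
    linarith

lemma dlt_eq (n i : ℕ) : dlt p n i = (n : ℚ) + expo p i := by
  simp only [dlt, expo]
  ring

lemma parta (n i m j : ℕ) (hni : n ≤ i) (hpc : ¬ p ∣ Nat.choose i n) (hmj : m ≤ j)
    (hlt : n < m ∨ (n = m ∧ i < j)) :
    v p (strunc p n i - strunc p m j) = ((dlt p n i : ℚ) : WithTop ℚ) := by
  rw [dlt_eq]
  apply orderTop_eq_of'
  · rw [HahnSeries.coeff_sub, strunc_coeff_rep p n i n i hni,
      strunc_coeff_rep p m j n i hni, if_neg (by omega), if_pos (by omega)]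
    simpa using choose_cast_ne p hpc
  · intro q hq
    rw [HahnSeries.coeff_sub]
    by_cases hrep : ∃ a b : ℕ, a ≤ b ∧ q = (a : ℚ) + expo p b
    · obtain ⟨a, b, hab, rfl⟩ := hrep
      rw [strunc_coeff_rep p n i a b hab, strunc_coeff_rep p m j a b hab]
      have hc1 : a < n ∨ (a = n ∧ b < i) := cond_of_lt p n i a b hq
      rw [if_pos hc1, if_pos (show a < m ∨ (a = m ∧ b < j) by omega), sub_self]
    · push_neg at hrep
      rw [strunc_coeff_nonrep p n i q hrep, strunc_coeff_nonrep p m j q hrep, sub_self]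

lemma partb (n i : ℕ) (hni : n ≤ i) (hpc : ¬ p ∣ Nat.choose i n) :
    v p (sH p - strunc p n i) = ((dlt p n i : ℚ) : WithTop ℚ) := by
  rw [dlt_eq]
  apply orderTop_eq_of'
  · rw [HahnSeries.coeff_sub, sH_coeff_of p n i hni,
      strunc_coeff_rep p n i n i hni, if_neg (by omega), sub_zero]
    exact choose_cast_ne p hpc
  · intro q hq
    rw [HahnSeries.coeff_sub]
    by_cases hrep : ∃ a b : ℕ, a ≤ b ∧ q = (a : ℚ) + expo p b
    · obtain ⟨a, b, hab, rfl⟩ := hrep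
      rw [sH_coeff_of p a b hab, strunc_coeff_rep p n i a b hab,
        if_pos (cond_of_lt p n i a b hq), sub_self]
    · push_neg at hrep
      rw [sH_coeff_zero p q hrep, strunc_coeff_nonrep p n i q hrep, sub_self]

lemma dlt_lt (n i m j : ℕ) (hlt : n < m ∨ (n = m ∧ i < j)) :
    dlt p n i < dlt p m j := by
  rw [dlt_eq, dlt_eq]
  rcases hlt with h | ⟨rfl, h⟩
  · have h1 : (n : ℚ) + 1 ≤ (m : ℚ) := by exact_mod_cast h
    have := expo_neg' p i
    have := expo_gt' p j
    linarith
  · have := expo_strictMono p h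
    linarith

lemma om_X_sub_C (n i : ℕ) (b : H p) :
    om p (strunc p n i) (dlt p n i) (X - Polynomial.C b) =
      min (v p (strunc p n i - b)) ((dlt p n i : ℚ) : WithTop ℚ) := by
  simp only [om, natDegree_X_sub_C]
  rw [show Finset.range (1 + 1) = {0, 1} from by decide]
  rw [Finset.inf_insert, Finset.inf_singleton]
  have c0 : (Polynomial.taylor (strunc p n i) (X - Polynomial.C b)).coeff 0
      = strunc p n i - b := by
    rw [Polynomial.taylor_coeff_zero]
    simp
  have c1 : (Polynomial.taylor (strunc p n i) (X - Polynomial.C b)).coeff 1 = 1 := by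
    rw [Polynomial.taylor_coeff_one]
    simp
  rw [c0, c1]
  have hv1 : v p (1 : H p) = 0 := HahnSeries.orderTop_one
  rw [hv1]
  push_cast
  simp

end AuxStrunc

/-- (a) for `(n,i) < (m,j)` in `S` (lexicographically),
`v(s_{n,i} - s_{m,j}) = δ(n,i)`; (b) `v(s - s_{n,i}) = δ(n,i)`;
(c) `ω_{s_{n,i},δ(n,i)}(x - s_{m,j}) = min(δ(n,i), δ(m,j))`. -/
theorem strunc_valuation_facts :
    (∀ n i m j : ℕ, n ≤ i → ¬ p ∣ Nat.choose i n → m ≤ j → ¬ p ∣ Nat.choose j m →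
      (n < m ∨ (n = m ∧ i < j)) →
      v p (strunc p n i - strunc p m j) = ((dlt p n i : ℚ) : WithTop ℚ))
    ∧ (∀ n i : ℕ, n ≤ i → ¬ p ∣ Nat.choose i n →
      v p (sH p - strunc p n i) = ((dlt p n i : ℚ) : WithTop ℚ))
    ∧ (∀ n i m j : ℕ, n ≤ i → ¬ p ∣ Nat.choose i n → m ≤ j → ¬ p ∣ Nat.choose j m →
      om p (strunc p n i) (dlt p n i) (X - Polynomial.C (strunc p m j))
        = ((min (dlt p n i) (dlt p m j) : ℚ) : WithTop ℚ)) := by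
  refine ⟨fun n i m j hni hi hmj hj hlt => parta p n i m j hni hi hmj hlt,
      fun n i hni hi => partb p n i hni hi, ?_⟩
  intro n i m j hni hi hmj hj
  rw [om_X_sub_C]
  have htri : (n < m ∨ (n = m ∧ i < j)) ∨ (n = m ∧ i = j) ∨ (m < n ∨ (m = n ∧ j < i)) := by
    omega
  rcases htri with h | ⟨rfl, rfl⟩ | h
  · rw [parta p n i m j hni hi hmj h]
    have hd := dlt_lt p n i m j h
    exact_mod_cast ((min_self _).trans (min_eq_left hd.le).symm)
  · rw [sub_self]
    have v0 : v p (0 : H p) = ⊤ := HahnSeries.orderTop_zero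
    rw [v0, min_eq_right le_top]
    exact_mod_cast (min_self (dlt p n i)).symm
  · have hv : v p (strunc p n i - strunc p m j) = ((dlt p m j : ℚ) : WithTop ℚ) := by
      rw [show strunc p n i - strunc p m j = -(strunc p m j - strunc p n i) from
        (neg_sub _ _).symm]
      show (-(strunc p m j - strunc p n i)).orderTop = _
      rw [HahnSeries.orderTop_neg]
      exact parta p m j n i hmj hj hni h
    rw [hv]
    have hd := dlt_lt p m j n i h
    have : min (dlt p m j) (dlt p n i) = min (dlt p n i) (dlt p m j) := min_comm _ _
    exact_mod_cast this
end

section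
/- Let A be a linearly ordered set with no maximal element and, for each i ∈ A, let ρ_i : K[x] → Δ ∪ {∞} be a valuation extending v (i.e., ρ_i restricted to K equals v) with ρ_i(f) = ∞ only for f = 0, such that for i < j one has ρ_i(f) ≤ ρ_j(f) for all f ∈ K[x] and ρ_i ≠ ρ_j. Then a nonzero f ∈ K[x] is stable for this family — i.e., there exists i ∈ A with ρ_j(f) = ρ_i(f) for all j > i — if and only if there exist i ∈ A and h ∈ K[x] with ρ_i(f·h − 1) > 0 (the latter condition expresses that the initial term in_{ρ_i} f is a unit in the graded algebra of ρ_i). -/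
/-!
STATEMENT 15 (Lemma "stable = unit"): an abstract family of valuations on `K[x]`.
`K` is a field with an additive valuation `v` with values in `Δ ∪ {∞}` (we work directly
with the divisible hull `Δ` of the value group), `A` a linearly ordered index set with no
maximal element, and `(ρ_i)_{i ∈ A}` a strictly increasing family of valuations on `K[x]`
extending `v`.  A nonzero `f` is stable for the family iff its initial term is a unit in the
graded algebra of some `ρ_i`, i.e. iff `ρ_i (f·h - 1) > 0` for some `i` and some `h ∈ K[x]`.
-/

/-- If `w (a - 1) > 0` then `w a = 0`. -/
private lemma addval_eq_zero_of_sub_one {R Δ : Type*} [CommRing R]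
    [AddCommGroup Δ] [LinearOrder Δ] [IsOrderedAddMonoid Δ]
    (w : AddValuation R (WithTop Δ)) {a : R} (h : 0 < w (a - 1)) : w a = 0 := by
  have h1 : w 1 < w (a - 1) := by rw [w.map_one]; exact h
  have h2 := w.map_eq_of_lt_sub (x := 1) (y := a) h1
  rwa [w.map_one] at h2

theorem stable_iff_initial_term_unit {K : Type*} [Field K]
    {Δ : Type*} [AddCommGroup Δ] [LinearOrder Δ] [IsOrderedAddMonoid Δ]
    {A : Type*} [LinearOrder A] (hA : ∀ i : A, ∃ j : A, i < j)
    (v : AddValuation K (WithTop Δ))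
    (ρ : A → AddValuation (Polynomial K) (WithTop Δ))
    (hres : ∀ (i : A) (c : K), ρ i (Polynomial.C c) = v c)
    (hinf : ∀ (i : A) (f : Polynomial K), ρ i f = ⊤ → f = 0)
    (hmono : ∀ i j : A, i < j → (∀ f : Polynomial K, ρ i f ≤ ρ j f) ∧ ρ i ≠ ρ j)
    (f : Polynomial K) (hf : f ≠ 0) :
    (∃ i : A, ∀ j : A, i < j → ρ j f = ρ i f) ↔
      (∃ (i : A) (h : Polynomial K), 0 < ρ i (f * h - 1)) := by
  have hfin : ∀ (k : A) (p : Polynomial K), p ≠ 0 → ρ k p ≠ ⊤ :=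
    fun k p hp ht => hp (hinf k p ht)
  constructor
  · -- stable → unit
    rintro ⟨i₀, hstab⟩
    obtain ⟨i, hi₀i⟩ := hA i₀
    obtain ⟨j, hij⟩ := hA i
    have hle : ∀ p : Polynomial K, ρ i p ≤ ρ j p := (hmono i j hij).1
    have hne : ρ i ≠ ρ j := (hmono i j hij).2
    -- a minimal-degree polynomial with strictly increasing value
    obtain ⟨n₀, ⟨g, hgdeg, hg⟩, hmin⟩ :
        ∃ n₀ : ℕ, (∃ g : Polynomial K, g.natDegree = n₀ ∧ ρ i g < ρ j g) ∧
          ∀ k : ℕ, (∃ g : Polynomial K, g.natDegree = k ∧ ρ i g < ρ j g) → n₀ ≤ k := by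
      have hex : ∃ g : Polynomial K, ρ i g < ρ j g := by
        by_contra hc
        push_neg at hc
        exact hne (AddValuation.ext fun p => le_antisymm (hle p) (hc p))
      obtain ⟨g₀, hg₀⟩ := hex
      have hSne : Set.Nonempty {n : ℕ | ∃ g : Polynomial K, g.natDegree = n ∧ ρ i g < ρ j g} :=
        ⟨g₀.natDegree, g₀, rfl, hg₀⟩
      exact ⟨_, Nat.sInf_mem hSne, fun k hk => Nat.sInf_le hk⟩
    have fact1 : ∀ r : Polynomial K, r.natDegree < n₀ → ρ i r = ρ j r := by
      intro r hr
      refine le_antisymm (hle r) (le_of_not_gt fun hlt => ?_)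
      exact absurd (hmin _ ⟨r, rfl, hlt⟩) (by omega)
    have hg0 : g ≠ 0 := by
      rintro rfl
      rw [(ρ i).map_zero, (ρ j).map_zero] at hg
      exact lt_irrefl _ hg
    have hn₀pos : 0 < n₀ := by
      rcases Nat.eq_zero_or_pos n₀ with h0 | h
      · obtain ⟨c, hc⟩ := Polynomial.natDegree_eq_zero.mp (hgdeg.trans h0)
        rw [← hc, hres i c, hres j c] at hg
        exact absurd hg (lt_irrefl _)
      · exact h
    have htop0 : (0 : WithTop Δ) < ⊤ := Ne.lt_top (by simp)
    -- Lemma C: polynomials of degree < n₀ have unit initial form at j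
    have lemC : ∀ m : ℕ, ∀ r : Polynomial K, r.natDegree = m → r ≠ 0 → r.natDegree < n₀ →
        ∃ h : Polynomial K, 0 < ρ j (r * h - 1) := by
      intro m
      induction m using Nat.strong_induction_on with
      | _ m IH =>
        intro r hrm hr0 hrlt
        rcases Nat.eq_zero_or_pos m with hm0 | hmpos
        · -- r is a nonzero constant
          obtain ⟨c, hc⟩ := Polynomial.natDegree_eq_zero.mp (hrm.trans hm0)
          have hcne : c ≠ 0 := by
            rintro rfl
            exact hr0 (by rw [← hc, Polynomial.C_0])
          refine ⟨Polynomial.C c⁻¹, ?_⟩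
          have hz : r * Polynomial.C c⁻¹ - 1 = 0 := by
            rw [← hc, ← Polynomial.C_mul, mul_inv_cancel₀ hcne, Polynomial.C_1, sub_self]
          rw [hz, (ρ j).map_zero]
          exact htop0
        · -- divide g by r
          obtain ⟨t, s, hdiv, hia, hscase⟩ :
              ∃ t s : Polynomial K, s + r * t = g ∧ ρ i (r * t) = ρ j (r * t) ∧
                (s = 0 ∨ (s ≠ 0 ∧ s.natDegree < m)) := by
            have hmon : (r * Polynomial.C r.leadingCoeff⁻¹).Monic :=
              Polynomial.monic_mul_leadingCoeff_inv hr0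
            have hdeg' : (r * Polynomial.C r.leadingCoeff⁻¹).degree = r.degree :=
              Polynomial.degree_mul_leadingCoeff_inv r hr0
            have hndeg' : (r * Polynomial.C r.leadingCoeff⁻¹).natDegree = r.natDegree :=
              Polynomial.natDegree_mul_leadingCoeff_inv r hr0
            refine ⟨Polynomial.C r.leadingCoeff⁻¹ * (g /ₘ (r * Polynomial.C r.leadingCoeff⁻¹)),
              g %ₘ (r * Polynomial.C r.leadingCoeff⁻¹), ?_, ?_, ?_⟩
            · rw [← mul_assoc]
              exact Polynomial.modByMonic_add_div g (r * Polynomial.C r.leadingCoeff⁻¹)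
            · have hass : r * (Polynomial.C r.leadingCoeff⁻¹ *
                  (g /ₘ (r * Polynomial.C r.leadingCoeff⁻¹))) =
                  (r * Polynomial.C r.leadingCoeff⁻¹) *
                  (g /ₘ (r * Polynomial.C r.leadingCoeff⁻¹)) := by ring
              have hq : (g /ₘ (r * Polynomial.C r.leadingCoeff⁻¹)).natDegree < n₀ := by
                have h1 := Polynomial.natDegree_divByMonic g hmon
                omega
              rw [hass, (ρ i).map_mul, (ρ j).map_mul, fact1 _ (by omega), fact1 _ hq]
            · rcases eq_or_ne (g %ₘ (r * Polynomial.C r.leadingCoeff⁻¹)) 0 with h | h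
              · exact Or.inl h
              · refine Or.inr ⟨h, ?_⟩
                have h2 := Polynomial.degree_modByMonic_lt g hmon
                rw [hdeg'] at h2
                have h3 := Polynomial.natDegree_lt_natDegree h h2
                omega
          rcases hscase with hs0 | ⟨hs0, hsdeg⟩
          · -- impossible: g = r·t would have equal values
            exfalso
            rw [hs0, zero_add] at hdiv
            rw [← hdiv, hia] at hg
            exact lt_irrefl _ hg
          · have his : ρ i s = ρ j s := fact1 s (by omega)
            -- ρ j (r·t) = ρ j s
            have hja_s : ρ j (r * t) = ρ j s := by
              by_contra hne'
              have hj : ρ j g = min (ρ j s) (ρ j (r * t)) := by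
                rw [← hdiv]
                exact (ρ j).map_add_of_distinct_val (fun hsa => hne' hsa.symm)
              have hi' : ρ i g = min (ρ i s) (ρ i (r * t)) := by
                rw [← hdiv]
                exact (ρ i).map_add_of_distinct_val
                  (by rw [his, hia]; exact fun hsa => hne' hsa.symm)
              rw [hi', his, hia, ← hj] at hg
              exact lt_irrefl _ hg
            have hjs_lt_g : ρ j s < ρ j g := by
              have h1 : min (ρ i s) (ρ i (r * t)) ≤ ρ i g := by
                rw [← hdiv]
                exact (ρ i).map_add s (r * t)
              rw [his, hia, hja_s, min_self] at h1
              exact lt_of_le_of_lt h1 hg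
            obtain ⟨hs, hhs⟩ := IH s.natDegree (by omega) s rfl hs0 (by omega)
            have hhs0 : hs ≠ 0 := by
              rintro rfl
              rw [mul_zero, zero_sub, (ρ j).map_neg, (ρ j).map_one] at hhs
              exact lt_irrefl _ hhs
            have hshs : ρ j (s * hs) = 0 := addval_eq_zero_of_sub_one (ρ j) hhs
            refine ⟨-(t * hs), ?_⟩
            have hgs : r * t = g - s := by
              rw [eq_sub_iff_add_eq, add_comm]
              exact hdiv
            have hkey : r * -(t * hs) - 1 = (s * hs - 1) - g * hs := by
              linear_combination (-hs) * hgs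
            rw [hkey]
            have h2 : 0 < ρ j (g * hs) := by
              rw [(ρ j).map_mul]
              calc (0 : WithTop Δ) = ρ j (s * hs) := hshs.symm
                _ = ρ j s + ρ j hs := (ρ j).map_mul s hs
                _ < ρ j g + ρ j hs := WithTop.add_lt_add_right (hfin j hs hhs0) hjs_lt_g
            exact lt_of_lt_of_le (lt_min hhs h2) ((ρ j).map_sub _ _)
    -- now reduce f
    have hstabij : ρ i f = ρ j f := by
      rw [hstab i hi₀i, hstab j (hi₀i.trans hij)]
    by_cases hdf : f.natDegree < n₀
    · obtain ⟨h, hh⟩ := lemC f.natDegree f rfl hf hdf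
      exact ⟨j, h, hh⟩
    · push_neg at hdf
      obtain ⟨T, R, hdiv, hb, hRdeglt⟩ :
          ∃ T R : Polynomial K, R + T = f ∧ ρ i T < ρ j T ∧ R.natDegree < n₀ := by
        have hmon : (g * Polynomial.C g.leadingCoeff⁻¹).Monic :=
          Polynomial.monic_mul_leadingCoeff_inv hg0
        have hdeg' : (g * Polynomial.C g.leadingCoeff⁻¹).degree = g.degree :=
          Polynomial.degree_mul_leadingCoeff_inv g hg0
        have hndeg' : (g * Polynomial.C g.leadingCoeff⁻¹).natDegree = g.natDegree :=
          Polynomial.natDegree_mul_leadingCoeff_inv g hg0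
        have hC0 : Polynomial.C g.leadingCoeff⁻¹ ≠ 0 :=
          Polynomial.C_ne_zero.mpr (inv_ne_zero (Polynomial.leadingCoeff_ne_zero.mpr hg0))
        have hRd : (f %ₘ (g * Polynomial.C g.leadingCoeff⁻¹)).natDegree < n₀ := by
          rcases eq_or_ne (f %ₘ (g * Polynomial.C g.leadingCoeff⁻¹)) 0 with h0 | h0
          · rw [h0, Polynomial.natDegree_zero]; omega
          · have h2 := Polynomial.degree_modByMonic_lt f hmon
            have h3 := Polynomial.natDegree_lt_natDegree h0 h2
            omega
        have hQ0 : f /ₘ (g * Polynomial.C g.leadingCoeff⁻¹) ≠ 0 := by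
          intro hQ
          have h1 := Polynomial.modByMonic_add_div f (g * Polynomial.C g.leadingCoeff⁻¹)
          rw [hQ, mul_zero, add_zero] at h1
          rw [h1] at hRd
          omega
        have hg' : ρ i (g * Polynomial.C g.leadingCoeff⁻¹) <
            ρ j (g * Polynomial.C g.leadingCoeff⁻¹) := by
          rw [(ρ i).map_mul, (ρ j).map_mul, hres i, hres j, ← hres i]
          exact WithTop.add_lt_add_right (hfin i _ hC0) hg
        refine ⟨(g * Polynomial.C g.leadingCoeff⁻¹) * (f /ₘ (g * Polynomial.C g.leadingCoeff⁻¹)),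
          f %ₘ (g * Polynomial.C g.leadingCoeff⁻¹),
          Polynomial.modByMonic_add_div f (g * Polynomial.C g.leadingCoeff⁻¹), ?_, hRd⟩
        rw [(ρ i).map_mul, (ρ j).map_mul]
        calc ρ i (g * Polynomial.C g.leadingCoeff⁻¹) + ρ i (f /ₘ (g * Polynomial.C g.leadingCoeff⁻¹))
            < ρ j (g * Polynomial.C g.leadingCoeff⁻¹) + ρ i (f /ₘ (g * Polynomial.C g.leadingCoeff⁻¹)) :=
              WithTop.add_lt_add_right (hfin i _ hQ0) hg'
          _ ≤ ρ j (g * Polynomial.C g.leadingCoeff⁻¹) + ρ j (f /ₘ (g * Polynomial.C g.leadingCoeff⁻¹)) :=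
              add_le_add_right (hle _) _
      have hiR : ρ i R = ρ j R := fact1 R hRdeglt
      have hRlt : ρ j R < ρ j T := by
        by_contra hcon
        push_neg at hcon
        have h1 : ρ i T < ρ i R := by
          rw [hiR]
          exact lt_of_lt_of_le hb hcon
        have h2 : ρ i f = ρ i T := by
          rw [← hdiv]
          exact (ρ i).map_add_eq_of_lt_right h1
        have h3 : ρ j T ≤ ρ j f := by
          rw [← hdiv]
          exact le_trans (le_min hcon le_rfl) ((ρ j).map_add R T)
        rw [← hstabij, h2] at h3
        exact absurd hb (not_lt.mpr h3)
      have hR0 : R ≠ 0 := by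
        rintro rfl
        rw [(ρ j).map_zero] at hRlt
        exact not_top_lt hRlt
      obtain ⟨h, hh⟩ := lemC R.natDegree R rfl hR0 hRdeglt
      have hh0 : h ≠ 0 := by
        rintro rfl
        rw [mul_zero, zero_sub, (ρ j).map_neg, (ρ j).map_one] at hh
        exact lt_irrefl _ hh
      have hRh : ρ j (R * h) = 0 := addval_eq_zero_of_sub_one (ρ j) hh
      refine ⟨j, h, ?_⟩
      have hkey : f * h - 1 = (R * h - 1) + T * h := by
        linear_combination (-h) * hdiv
      rw [hkey]
      have h2 : 0 < ρ j (T * h) := by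
        rw [(ρ j).map_mul]
        calc (0 : WithTop Δ) = ρ j (R * h) := hRh.symm
          _ = ρ j R + ρ j h := (ρ j).map_mul R h
          _ < ρ j T + ρ j h := WithTop.add_lt_add_right (hfin j h hh0) hRlt
      exact lt_of_lt_of_le (lt_min hh h2) ((ρ j).map_add _ _)
  · -- unit → stable
    rintro ⟨i, h, hpos⟩
    have hh0 : h ≠ 0 := by
      rintro rfl
      rw [mul_zero, zero_sub, (ρ i).map_neg, (ρ i).map_one] at hpos
      exact lt_irrefl _ hpos
    have hfh : ρ i (f * h) = 0 := addval_eq_zero_of_sub_one (ρ i) hpos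
    refine ⟨i, fun j hij => ?_⟩
    have hle := (hmono i j hij).1
    have hposj : 0 < ρ j (f * h - 1) := lt_of_lt_of_le hpos (hle _)
    have hfhj : ρ j (f * h) = 0 := addval_eq_zero_of_sub_one (ρ j) hposj
    by_contra hne'
    have hlt : ρ i f < ρ j f := lt_of_le_of_ne (hle f) (Ne.symm hne')
    have hcon : ρ i f + ρ i h < ρ j f + ρ j h :=
      lt_of_lt_of_le (WithTop.add_lt_add_right (hfin i h hh0) hlt)
        (add_le_add_right (hle h) _)
    rw [← (ρ i).map_mul, ← (ρ j).map_mul, hfh, hfhj] at hcon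
    exact lt_irrefl _ hcon
end

section
/- For all a, b ∈ L and δ, ε ∈ Γ, one has ω_{a,δ}(f) ≤ ω_{b,ε}(f) for every f ∈ L[x] if and only if w(a − b) ≥ δ and δ ≤ ε. -/
/-!
STATEMENT 17: comparison of depth-zero valuations.  `L` is a field with an additive
valuation `w : L → Γ ∪ {∞}` (with `w x = ∞` only for `x = 0`), and for `a ∈ L`, `δ ∈ Γ`,
`ω_{a,δ}(f) = min_ℓ (w(a_ℓ) + ℓ·δ)` where `f = ∑ a_ℓ(x-a)^ℓ`.  Then
`ω_{a,δ} ≤ ω_{b,ε}` pointwise iff `w(a-b) ≥ δ` and `δ ≤ ε`.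
-/

/-- The depth-zero valuation `ω_{a,δ}` attached to `a ∈ L` and `δ ∈ Γ`. -/
noncomputable def omGen {L Γ : Type*} [Field L] [AddCommGroup Γ] [LinearOrder Γ] [IsOrderedAddMonoid Γ]
    (w : AddValuation L (WithTop Γ)) (a : L) (δ : Γ) (f : Polynomial L) : WithTop Γ :=
  (Finset.range (f.natDegree + 1)).inf
    fun ℓ => w ((Polynomial.taylor a f).coeff ℓ) + ((ℓ • δ : Γ) : WithTop Γ)

section Aux

open Polynomial

variable {L Γ : Type*} [Field L] [AddCommGroup Γ] [LinearOrder Γ] [IsOrderedAddMonoid Γ]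

lemma aux_w_nat_nonneg (w : AddValuation L (WithTop Γ)) (n : ℕ) : (0 : WithTop Γ) ≤ w (n : L) := by
  induction n with
  | zero => simp [AddValuation.map_zero]
  | succ n ih =>
    push_cast
    exact w.map_le_add ih w.map_one.ge

lemma aux_coe_nsmul (d : Γ) (n : ℕ) : ((n • d : Γ) : WithTop Γ) = n • (d : WithTop Γ) := by
  induction n with
  | zero => simp
  | succ m ih => rw [succ_nsmul, succ_nsmul, WithTop.coe_add, ih]

/-- `omGen` is bounded above by every term, even beyond the degree. -/
lemma omGen_le_term (w : AddValuation L (WithTop Γ)) (a : L) (δ : Γ) (f : Polynomial L) (m : ℕ) :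
    omGen w a δ f ≤ w ((Polynomial.taylor a f).coeff m) + ((m • δ : Γ) : WithTop Γ) := by
  rcases le_or_gt m f.natDegree with h | h
  · exact Finset.inf_le (Finset.mem_range.2 (Nat.lt_succ_of_le h))
  · have hz : (Polynomial.taylor a f).coeff m = 0 := by
      apply Polynomial.coeff_eq_zero_of_natDegree_lt
      rwa [Polynomial.natDegree_taylor]
    simp [hz, AddValuation.map_zero, top_add]

lemma omGen_linear (w : AddValuation L (WithTop Γ)) (a : L) (δ : Γ) (b : L) :
    omGen w a δ (X - C b) = min (w (a - b)) (δ : WithTop Γ) := by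
  have hco : Polynomial.taylor a (X - C b) = X + C (a - b) := by
    rw [map_sub, Polynomial.taylor_X, Polynomial.taylor_C, map_sub, add_sub_assoc]
  have hdeg : (X - C b : Polynomial L).natDegree = 1 := Polynomial.natDegree_X_sub_C b
  rw [omGen, hdeg]
  have : Finset.range 2 = {0, 1} := by decide
  rw [this, Finset.inf_insert, Finset.inf_singleton, hco]
  simp [AddValuation.map_one, min_comm]

lemma omGen_mono (w : AddValuation L (WithTop Γ)) {a b : L} {δ ε : Γ}
    (hδε : δ ≤ ε) (hab : (δ : WithTop Γ) ≤ w (a - b)) (f : Polynomial L) :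
    omGen w a δ f ≤ omGen w b ε f := by
  apply Finset.le_inf
  intro k _
  have h1 : ((k • δ : Γ) : WithTop Γ) ≤ ((k • ε : Γ) : WithTop Γ) := by
    exact_mod_cast nsmul_le_nsmul_right hδε k
  refine le_trans ?_ (add_le_add le_rfl h1)
  -- Reduce to `omGen w a δ f ≤ w ((taylor b f).coeff k) + ↑(k • δ)`.
  have hcancel : ∀ x : WithTop Γ, x + ((k • δ : Γ) : WithTop Γ) + ((-(k • δ) : Γ) : WithTop Γ) = x := by
    intro x
    rw [add_assoc, ← WithTop.coe_add, add_neg_cancel, WithTop.coe_zero, add_zero]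
  -- Rewrite the Taylor coefficient at `b` via the one at `a`.
  have hbt : Polynomial.taylor b f = Polynomial.taylor (b - a) (Polynomial.taylor a f) := by
    rw [Polynomial.taylor_taylor, sub_add_cancel]
  rw [hbt, Polynomial.taylor_coeff, Polynomial.eval_eq_sum_range]
  set g := Polynomial.hasseDeriv k (Polynomial.taylor a f) with hg
  -- Per-term bound.
  have hterm : ∀ i ∈ Finset.range (g.natDegree + 1),
      omGen w a δ f + ((-(k • δ) : Γ) : WithTop Γ) ≤ w (g.coeff i * (b - a) ^ i) := by
    intro i _
    rw [AddValuation.map_mul, hg, Polynomial.hasseDeriv_coeff, AddValuation.map_mul,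
      AddValuation.map_pow]
    have hpow : ((i • δ : Γ) : WithTop Γ) ≤ i • w (b - a) := by
      rw [aux_coe_nsmul]
      refine nsmul_le_nsmul_right ?_ i
      rwa [w.map_sub_swap]
    have hbase : omGen w a δ f ≤ w ((Polynomial.taylor a f).coeff (i + k)) +
        (((i + k) • δ : Γ) : WithTop Γ) := omGen_le_term w a δ f (i + k)
    have hsplit : (((i + k) • δ : Γ) : WithTop Γ)
        = ((i • δ : Γ) : WithTop Γ) + ((k • δ : Γ) : WithTop Γ) := by
      rw [← WithTop.coe_add, add_nsmul]
    calc omGen w a δ f + ((-(k • δ) : Γ) : WithTop Γ)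
        ≤ (w ((Polynomial.taylor a f).coeff (i + k)) + (((i + k) • δ : Γ) : WithTop Γ))
            + ((-(k • δ) : Γ) : WithTop Γ) := add_le_add hbase le_rfl
      _ = w ((Polynomial.taylor a f).coeff (i + k)) + ((i • δ : Γ) : WithTop Γ) := by
            rw [hsplit, ← add_assoc]
            exact hcancel _
      _ ≤ w ((Polynomial.taylor a f).coeff (i + k)) + i • w (b - a) :=
            add_le_add le_rfl hpow
      _ ≤ w (((i + k).choose k : L)) +
            (w ((Polynomial.taylor a f).coeff (i + k)) + i • w (b - a)) :=
            le_add_of_nonneg_left (aux_w_nat_nonneg w _)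
      _ = w (((i + k).choose k : L)) + w ((Polynomial.taylor a f).coeff (i + k))
            + i • w (b - a) := by rw [add_assoc]
  have hsum := w.map_le_sum hterm
  calc omGen w a δ f
      = omGen w a δ f + ((-(k • δ) : Γ) : WithTop Γ) + ((k • δ : Γ) : WithTop Γ) := by
        rw [add_assoc, ← WithTop.coe_add, neg_add_cancel, WithTop.coe_zero, add_zero]
    _ ≤ w (∑ i ∈ Finset.range (g.natDegree + 1), g.coeff i * (b - a) ^ i)
          + ((k • δ : Γ) : WithTop Γ) := add_le_add hsum le_rfl

end Aux

theorem depth_zero_le_iff {L Γ : Type*} [Field L] [AddCommGroup Γ] [LinearOrder Γ] [IsOrderedAddMonoid Γ]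
    (w : AddValuation L (WithTop Γ)) (hw : ∀ x : L, w x = ⊤ → x = 0)
    (a b : L) (δ ε : Γ) :
    (∀ f : Polynomial L, omGen w a δ f ≤ omGen w b ε f) ↔
      (((δ : WithTop Γ) ≤ w (a - b)) ∧ δ ≤ ε) := by
  constructor
  · intro h
    have key := h (Polynomial.X - Polynomial.C a)
    rw [omGen_linear, omGen_linear, sub_self, AddValuation.map_zero] at key
    simp only [min_top_left] at key
    -- key : ↑δ ≤ min (w (b - a)) ↑ε
    have h1 : (δ : WithTop Γ) ≤ w (b - a) := key.trans (min_le_left _ _)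
    have h2 : (δ : WithTop Γ) ≤ (ε : WithTop Γ) := key.trans (min_le_right _ _)
    rw [w.map_sub_swap] at h1
    exact ⟨h1, WithTop.coe_le_coe.mp h2⟩
  · rintro ⟨h1, h2⟩ f
    exact omGen_mono w h2 h1 f
end

section
/- A polynomial g ∈ K[x] of degree ≥ 1 is μ-minimal if and only if μ computes g-adic expansions term-by-term: for every f ∈ K[x] and every expression f = Σ_ℓ a_ℓ·g^ℓ with polynomials a_ℓ ∈ K[x] of degree deg a_ℓ < deg g (all but finitely many zero), one has μ(f) = min_ℓ μ(a_ℓ·g^ℓ). -/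
/-!
STATEMENT 18: a polynomial `g ∈ K[x]` of degree `≥ 1` is `μ`-minimal iff `μ` computes
`g`-adic expansions term by term.  Here `μ` is an additive valuation on `K[x]` with
`μ f = ∞` only for `f = 0`, and `g` is `μ`-minimal when for every nonzero `f` with
`deg f < deg g` there is no `q` with `μ(f - q·g) > μ(f)`.
-/

/-- `g` is `μ`-minimal: for every nonzero `f ∈ K[x]` with `deg f < deg g` there is no
`q ∈ K[x]` with `μ(f - q·g) > μ(f)`. -/
def MuMinimal {K Γ : Type*} [Field K] [AddCommGroup Γ] [LinearOrder Γ] [IsOrderedAddMonoid Γ]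
    (μ : AddValuation (Polynomial K) (WithTop Γ)) (g : Polynomial K) : Prop :=
  ∀ f : Polynomial K, f ≠ 0 → f.degree < g.degree →
    ∀ q : Polynomial K, ¬ (μ f < μ (f - q * g))


open Polynomial Finset

section Aux

variable {K Γ : Type*} [Field K] [AddCommGroup Γ] [LinearOrder Γ] [IsOrderedAddMonoid Γ]

private lemma inf_range_succ0 (N : ℕ) (F : ℕ → WithTop Γ) :
    (range (N+1)).inf F = F 0 ⊓ (range N).inf (fun ℓ => F (ℓ+1)) := by
  induction N with
  | zero => simp
  | succ n ih =>
    rw [Finset.range_add_one, Finset.inf_insert, ih, Finset.range_add_one, Finset.inf_insert,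
      inf_left_comm]

private lemma inf_range_add (N : ℕ) (F : ℕ → WithTop Γ) (c : WithTop Γ) :
    (range N).inf F + c = (range N).inf (fun ℓ => F ℓ + c) := by
  induction N with
  | zero => simp
  | succ n ih =>
    rw [Finset.range_add_one, Finset.inf_insert, Finset.inf_insert, ← ih, min_add_add_right]

private lemma key (μ : AddValuation (Polynomial K) (WithTop Γ))
    {g : Polynomial K} (hmin : MuMinimal μ g)
    (f q : Polynomial K) (hf : f.degree < g.degree) :
    μ (f + q * g) = min (μ f) (μ (q * g)) := by
  have hge : min (μ f) (μ (q * g)) ≤ μ (f + q * g) := μ.map_add f (q * g)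
  rcases lt_trichotomy (μ f) (μ (q * g)) with h | h | h
  · rw [min_eq_left h.le] at hge ⊢
    refine le_antisymm ?_ hge
    have h2 : min (μ (f + q * g)) (μ (q * g)) ≤ μ f := by
      have := μ.map_sub (f + q * g) (q * g)
      simpa using this
    by_contra hlt
    push_neg at hlt
    rcases min_le_iff.mp h2 with h3 | h3
    · exact absurd h3 (not_le.mpr hlt)
    · exact absurd h3 (not_le.mpr h)
  · refine le_antisymm ?_ hge
    rw [h, min_self]
    by_contra hlt
    push_neg at hlt
    by_cases hf0 : f = 0
    · rw [hf0, μ.map_zero] at h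
      rw [← h] at hlt
      exact not_top_lt hlt
    · refine hmin f hf0 hf (-q) ?_
      have he : f - -q * g = f + q * g := by ring
      rw [he, h]
      exact hlt
  · rw [min_eq_right h.le] at hge ⊢
    refine le_antisymm ?_ hge
    have h2 : min (μ (f + q * g)) (μ f) ≤ μ (q * g) := by
      have := μ.map_sub (f + q * g) f
      rwa [add_sub_cancel_left] at this
    by_contra hlt
    push_neg at hlt
    rcases min_le_iff.mp h2 with h3 | h3
    · exact absurd h3 (not_le.mpr hlt)
    · exact absurd h3 (not_le.mpr h)

private lemma exists_expansion (g : Polynomial K) (hg : 1 ≤ g.degree) (q : Polynomial K) :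
    ∃ (N : ℕ) (b : ℕ → Polynomial K), (∀ ℓ, (b ℓ).degree < g.degree) ∧
      q = ∑ ℓ ∈ range N, b ℓ * g ^ ℓ := by
  have hg0 : g ≠ 0 := by
    intro h; rw [h, degree_zero] at hg; exact absurd hg (by simp)
  suffices H : ∀ n (q : Polynomial K), q.natDegree < n → ∃ (N : ℕ) (b : ℕ → Polynomial K),
      (∀ ℓ, (b ℓ).degree < g.degree) ∧ q = ∑ ℓ ∈ range N, b ℓ * g ^ ℓ from
    H (q.natDegree + 1) q (Nat.lt_succ_self _)
  intro n
  induction n with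
  | zero => intro q h; omega
  | succ n ih =>
    intro q hq
    by_cases hdeg : q.degree < g.degree
    · refine ⟨1, fun ℓ => if ℓ = 0 then q else 0, fun ℓ => ?_, by simp⟩
      by_cases hℓ : ℓ = 0
      · simpa [hℓ] using hdeg
      · simp only [hℓ, if_false, degree_zero]
        refine lt_of_lt_of_le ?_ hg
        exact_mod_cast WithBot.bot_lt_coe 1
    · push_neg at hdeg
      set g' := g * C g.leadingCoeff⁻¹ with hg'
      have hmon : g'.Monic := monic_mul_leadingCoeff_inv hg0
      have hdg' : g'.degree = g.degree := degree_mul_leadingCoeff_inv g hg0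
      have hq0 : q ≠ 0 := by
        intro h; rw [h, degree_zero] at hdeg
        exact hg0 (degree_eq_bot.mp (le_bot_iff.mp hdeg))
      have hlt : (q /ₘ g').degree < q.degree :=
        degree_divByMonic_lt q g' hq0 (by rw [hdg']; exact lt_of_lt_of_le (by norm_num) hg)
      have hd0 : q /ₘ g' ≠ 0 := by
        intro h
        have := modByMonic_add_div q g'
        rw [h, mul_zero, add_zero] at this
        have h2 : (q %ₘ g').degree < g.degree := by
          rw [← hdg']; exact degree_modByMonic_lt q hmon
        rw [this] at h2
        exact absurd hdeg (not_le.mpr h2)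
      have hnd : (q /ₘ g').natDegree < n := by
        have := natDegree_lt_natDegree hd0 hlt
        omega
      obtain ⟨N, b, hb, hrep⟩ := ih (q /ₘ g') hnd
      refine ⟨N + 1, fun ℓ => Nat.casesOn ℓ (q %ₘ g') (fun m => C g.leadingCoeff⁻¹ * b m),
        fun ℓ => ?_, ?_⟩
      · cases ℓ with
        | zero => rw [← hdg']; exact degree_modByMonic_lt q hmon
        | succ m =>
          calc (C g.leadingCoeff⁻¹ * b m).degree
              ≤ (C g.leadingCoeff⁻¹).degree + (b m).degree := degree_mul_le _ _
            _ ≤ 0 + (b m).degree := add_le_add degree_C_le le_rfl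
            _ = (b m).degree := zero_add _
            _ < g.degree := hb m
      · rw [Finset.sum_range_succ']
        simp only [pow_zero, mul_one]
        calc q = q %ₘ g' + g' * (q /ₘ g') := (modByMonic_add_div q g').symm
          _ = q %ₘ g' + g' * ∑ ℓ ∈ range N, b ℓ * g ^ ℓ := by rw [← hrep]
          _ = (∑ ℓ ∈ range N, C g.leadingCoeff⁻¹ * b ℓ * g ^ (ℓ + 1)) + q %ₘ g' := by
              rw [hg', Finset.mul_sum, add_comm]
              congr 1
              apply Finset.sum_congr rfl
              intro ℓ _
              ring

end Aux

theorem muMinimal_iff_expansion {K Γ : Type*} [Field K] [AddCommGroup Γ] [LinearOrder Γ] [IsOrderedAddMonoid Γ]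
    (μ : AddValuation (Polynomial K) (WithTop Γ))
    (hμ : ∀ f : Polynomial K, μ f = ⊤ → f = 0)
    (g : Polynomial K) (hg : 1 ≤ g.degree) :
    MuMinimal μ g ↔
      ∀ (f : Polynomial K) (N : ℕ) (a : ℕ → Polynomial K),
        (∀ ℓ : ℕ, (a ℓ).degree < g.degree) →
        f = ∑ ℓ ∈ Finset.range N, a ℓ * g ^ ℓ →
        μ f = (Finset.range N).inf fun ℓ => μ (a ℓ * g ^ ℓ) := by
  constructor
  · intro hmin f N a ha hf
    subst hf
    induction N generalizing a with
    | zero => simp [μ.map_zero]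
    | succ N ih =>
      have hsum : (∑ ℓ ∈ Finset.range (N + 1), a ℓ * g ^ ℓ)
          = a 0 + (∑ ℓ ∈ Finset.range N, a (ℓ + 1) * g ^ ℓ) * g := by
        rw [Finset.sum_range_succ', Finset.sum_mul, add_comm, pow_zero, mul_one]
        congr 1
        apply Finset.sum_congr rfl
        intro ℓ _
        ring
      have ihh := ih (fun ℓ => a (ℓ + 1)) (fun ℓ => ha (ℓ + 1))
      rw [hsum, key μ hmin (a 0) _ (ha 0), μ.map_mul]
      rw [show μ (∑ ℓ ∈ Finset.range N, a (ℓ + 1) * g ^ ℓ)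
          = (Finset.range N).inf (fun ℓ => μ (a (ℓ + 1) * g ^ ℓ)) from ihh]
      rw [inf_range_add (Γ := Γ), inf_range_succ0 (Γ := Γ)]
      congr 1
      · rw [pow_zero, mul_one]
      · apply Finset.inf_congr rfl
        intro ℓ _
        rw [← μ.map_mul]
        congr 1
        ring
  · intro hexp f hf0 hf q
    obtain ⟨N, b, hb, hq⟩ := exists_expansion g hg q
    have hdeg : ∀ ℓ, ((fun ℓ => (Nat.casesOn ℓ f fun m => -(b m) : Polynomial K)) ℓ).degree
        < g.degree := by
      intro ℓ
      cases ℓ with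
      | zero => exact hf
      | succ m => simpa using hb m
    have hrep : f - q * g = ∑ ℓ ∈ Finset.range (N + 1),
        (fun ℓ => (Nat.casesOn ℓ f fun m => -(b m) : Polynomial K)) ℓ * g ^ ℓ := by
      rw [Finset.sum_range_succ']
      show f - q * g = (∑ ℓ ∈ Finset.range N, -(b ℓ) * g ^ (ℓ + 1)) + f * g ^ 0
      rw [hq, Finset.sum_mul, sub_eq_add_neg, ← Finset.sum_neg_distrib, add_comm]
      congr 1
      · apply Finset.sum_congr rfl
        intro ℓ _
        ring
      · rw [pow_zero, mul_one]
    have key2 := hexp (f - q * g) (N + 1) _ hdeg hrep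
    intro hcon
    have h0 : ((Finset.range (N + 1)).inf fun ℓ =>
        μ ((fun ℓ => (Nat.casesOn ℓ f fun m => -(b m) : Polynomial K)) ℓ * g ^ ℓ)) ≤ μ f := by
      have := Finset.inf_le (f := fun ℓ =>
          μ ((fun ℓ => (Nat.casesOn ℓ f fun m => -(b m) : Polynomial K)) ℓ * g ^ ℓ))
        (Finset.mem_range.mpr (Nat.succ_pos N))
      simpa using this
    rw [key2] at hcon
    exact absurd h0 (not_le.mpr hcon)
end
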